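/- Let the edges of K_n be r-colored, and define a_1 = n and a_{j+1} = ⌈(a_j − 1)/r⌉. With good sequences defined as: (v_1,...,v_q) distinct vertices such that for each i < q there is a color C_i with {v_{i+1},...,v_q} contained in the C_i-neighborhood of v_i, the number of good sequences of length q is at least Π_{j=1}^q a_j. -/

import Mathlib

open SimpleGraph Finset

/-- The graph of color-`i` edges of an edge coloring `c` of the complete graph. -/
def colorGraph {V : Type*} {r : ℕ} (c : V → V → Fin r) (i : Fin r) : SimpleGraph V where
  Adj u v := u ≠ v ∧ c u v = i ∧ c v u = i
  symm := ⟨by intro u v h; exact ⟨h.1.symm, h.2.2, h.2.1⟩⟩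
  loopless := ⟨fun u h => h.1 rfl⟩

/-- `(v 0, …, v (q-1))` is a good sequence: the vertices are distinct and for each `i`
there is a color `C i` such that all later vertices lie in the `C i`-neighborhood of `v i`. -/
def GoodSeq {V : Type*} {r q : ℕ} (c : V → V → Fin r) (v : Fin q → V) : Prop :=
  Function.Injective v ∧ ∀ i : Fin q, ∃ C : Fin r, ∀ j : Fin q, i < j → c (v i) (v j) = C

/-- The recursive lower bound for the number of good sequences starting from a set of
size `m`. -/
def fcnt (r : ℕ) : ℕ → ℕ → ℕ
  | _, 0 => 1
  | m, q + 1 => m * fcnt r ((m - 1 + (r - 1)) / r) q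

lemma fcnt_mono (r : ℕ) : ∀ (q : ℕ) {m m' : ℕ}, m ≤ m' → fcnt r m q ≤ fcnt r m' q
  | 0, _, _, _ => le_refl 1
  | q + 1, m, m', h => by
    simp only [fcnt]
    exact Nat.mul_le_mul h (fcnt_mono r q (Nat.div_le_div_right
      (Nat.add_le_add_right (Nat.sub_le_sub_right h 1) _)))

/-- Good sequences with all values in `A`. -/
def GoodSeqIn {V : Type*} {r q : ℕ} (c : V → V → Fin r) (A : Finset V)
    (v : Fin q → V) : Prop :=
  (∀ i, v i ∈ A) ∧ GoodSeq c v

lemma pigeon {V : Type*} [DecidableEq V] {r : ℕ} (hr : 2 ≤ r) (c : V → V → Fin r)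
    (A : Finset V) (v0 : V) (hv0 : v0 ∈ A) :
    ∃ C : Fin r, (A.card - 1 + (r - 1)) / r ≤
      ((A.erase v0).filter (fun u => c v0 u = C)).card := by
  classical
  have hr0 : 0 < r := by omega
  obtain ⟨C, -, hC⟩ := Finset.exists_max_image (Finset.univ : Finset (Fin r))
      (fun C => ((A.erase v0).filter (fun u => c v0 u = C)).card)
      ⟨⟨0, hr0⟩, Finset.mem_univ _⟩
  refine ⟨C, ?_⟩
  set t := ((A.erase v0).filter (fun u => c v0 u = C)).card with ht
  have hsum : (A.erase v0).card =
      ∑ D : Fin r, ((A.erase v0).filter (fun u => c v0 u = D)).card := by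
    exact Finset.card_eq_sum_card_fiberwise (fun x _ => Finset.mem_univ _)
  have hle : (A.erase v0).card ≤ r * t := by
    rw [hsum]
    calc ∑ D : Fin r, ((A.erase v0).filter (fun u => c v0 u = D)).card
        ≤ ∑ _D : Fin r, t := Finset.sum_le_sum (fun D _ => hC D (Finset.mem_univ D))
      _ = r * t := by simp [mul_comm]
  have hcard : (A.erase v0).card = A.card - 1 := Finset.card_erase_of_mem hv0
  calc (A.card - 1 + (r - 1)) / r ≤ (r * t + (r - 1)) / r := by
        apply Nat.div_le_div_right
        omega
    _ = t := by
        rw [Nat.mul_add_div hr0]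
        simp [Nat.div_eq_of_lt (by omega : r - 1 < r)]

lemma goodSeqIn_card_ge {V : Type*} [Fintype V] [DecidableEq V] {r : ℕ} (hr : 2 ≤ r)
    (c : V → V → Fin r) :
    ∀ (q : ℕ) (A : Finset V),
      fcnt r A.card q ≤ Nat.card {v : Fin q → V // GoodSeqIn c A v} := by
  intro q
  induction q with
  | zero =>
    intro A
    have : Nonempty {v : Fin 0 → V // GoodSeqIn c A v} :=
      ⟨⟨fun i => i.elim0, fun i => i.elim0, fun i => i.elim0, fun i => i.elim0⟩⟩
    simpa [fcnt] using Nat.card_pos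
  | succ q ih =>
    intro A
    classical
    choose C hC using fun (v0 : A) => pigeon hr c A v0.1 v0.2
    set B : A → Finset V := fun v0 => (A.erase v0.1).filter (fun u => c v0.1 u = C v0)
      with hB
    -- the extension map
    have key : ∀ (v0 : A) (w : Fin q → V), GoodSeqIn c (B v0) w →
        GoodSeqIn c A (Fin.cons v0.1 w) := by
      rintro ⟨v0, hv0⟩ w ⟨hmem, hinj, hcol⟩
      have hmemA : ∀ j, w j ∈ A := fun j =>
        Finset.mem_of_mem_erase (Finset.mem_of_mem_filter _ (hmem j))
      have hne : ∀ j, w j ≠ v0 := fun j =>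
        Finset.ne_of_mem_erase (Finset.mem_of_mem_filter _ (hmem j))
      refine ⟨?_, ?_, ?_⟩
      · intro i
        refine Fin.cases ?_ ?_ i
        · simpa using hv0
        · intro j; simpa using hmemA j
      · apply Fin.cons_injective_of_injective
        · rintro ⟨j, rfl⟩
          exact hne j rfl
        · exact hinj
      · intro i
        refine Fin.cases ?_ ?_ i
        · refine ⟨C ⟨v0, hv0⟩, ?_⟩
          intro j hj
          obtain ⟨j', rfl⟩ := Fin.eq_succ_of_ne_zero (Fin.pos_iff_ne_zero.mp hj)
          simpa using (Finset.mem_filter.mp (hmem j')).2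
        · intro i'
          obtain ⟨C', hC'⟩ := hcol i'
          refine ⟨C', ?_⟩
          intro j hj
          have hj0 : j ≠ 0 := by
            rintro rfl
            exact absurd hj (by simp [Fin.lt_iff_val_lt_val])
          obtain ⟨j', rfl⟩ := Fin.eq_succ_of_ne_zero hj0
          have hlt : i' < j' := by
            rw [Fin.lt_iff_val_lt_val] at hj ⊢
            simpa using hj
          simp only [Fin.cons_succ]
          exact hC' j' hlt
    let Φ : (Σ v0 : A, {w : Fin q → V // GoodSeqIn c (B v0) w}) →
        {v : Fin (q + 1) → V // GoodSeqIn c A v} :=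
      fun p => ⟨Fin.cons p.1.1 p.2.1, key p.1 p.2.1 p.2.2⟩
    have hΦ : Function.Injective Φ := by
      rintro ⟨⟨v0, hv0⟩, w, hw⟩ ⟨⟨v0', hv0'⟩, w', hw'⟩ h
      have h1 : (Fin.cons v0 w : Fin (q + 1) → V) = Fin.cons v0' w' := by
        have := congrArg Subtype.val h
        simpa [Φ] using this
      have h2 : v0 = v0' := by
        have := congrFun h1 0; simpa using this
      subst h2
      have h3 : w = w' := by
        funext j
        have := congrFun h1 j.succ; simpa using this
      subst h3
      rfl
    have hfin : Finite {v : Fin (q + 1) → V // GoodSeqIn c A v} := by infer_instance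
    have hle := Nat.card_le_card_of_injective Φ hΦ
    have hsig : Nat.card (Σ v0 : A, {w : Fin q → V // GoodSeqIn c (B v0) w}) =
        ∑ v0 : A, Nat.card {w : Fin q → V // GoodSeqIn c (B v0) w} := by
      letI : ∀ v0 : A, Fintype {w : Fin q → V // GoodSeqIn c (B v0) w} :=
        fun v0 => Fintype.ofFinite _
      rw [Nat.card_eq_fintype_card, Fintype.card_sigma]
      exact Finset.sum_congr rfl (fun v0 _ => (Nat.card_eq_fintype_card).symm)
    calc fcnt r A.card (q + 1)
        = A.card * fcnt r ((A.card - 1 + (r - 1)) / r) q := rfl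
      _ = ∑ _v0 : A, fcnt r ((A.card - 1 + (r - 1)) / r) q := by
          simp [Finset.sum_const, Fintype.card_coe, mul_comm]
      _ ≤ ∑ v0 : A, Nat.card {w : Fin q → V // GoodSeqIn c (B v0) w} := by
          refine Finset.sum_le_sum (fun v0 _ => ?_)
          exact le_trans (fcnt_mono r q (hC v0)) (ih (B v0))
      _ = Nat.card (Σ v0 : A, {w : Fin q → V // GoodSeqIn c (B v0) w}) := hsig.symm
      _ ≤ Nat.card {v : Fin (q + 1) → V // GoodSeqIn c A v} := hle

lemma fcnt_eq_prod {r : ℕ} (a : ℕ → ℕ)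
    (harec : ∀ j ≥ 1, a (j + 1) = (a j - 1 + (r - 1)) / r) :
    ∀ (q j : ℕ), 1 ≤ j → fcnt r (a j) q = ∏ i ∈ Finset.Ico j (j + q), a i
  | 0, j, _ => by simp [fcnt]
  | q + 1, j, hj => by
    have h1 : 1 ≤ j + 1 := by omega
    have : fcnt r (a j) (q + 1) = a j * fcnt r (a (j + 1)) q := by
      rw [harec j hj]; rfl
    rw [this, fcnt_eq_prod a harec q (j + 1) h1,
      show j + (q + 1) = (j + 1) + q from by omega,
      Finset.prod_eq_prod_Ico_succ_bot (by omega : j < (j + 1) + q)]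

theorem goodSeq_card_ge {V : Type*} [Fintype V] (n r q : ℕ) (hr : 2 ≤ r)
    (hn : Fintype.card V = n) (c : V → V → Fin r) (hc : ∀ u v, c u v = c v u)
    (a : ℕ → ℕ) (ha1 : a 1 = n)
    (harec : ∀ j ≥ 1, a (j + 1) = (a j - 1 + (r - 1)) / r) :
    ∏ j ∈ Finset.Icc 1 q, a j ≤ Nat.card {v : Fin q → V // GoodSeq c v} := by
  classical
  have hIcc : Finset.Icc 1 q = Finset.Ico 1 (1 + q) := by
    rw [add_comm, Finset.Ico_add_one_right_eq_Icc]
  have hprod : ∏ j ∈ Finset.Icc 1 q, a j = fcnt r n q := by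
    rw [hIcc, ← fcnt_eq_prod a harec q 1 (le_refl 1), ha1]
  have hcardU : (Finset.univ : Finset V).card = n := by
    simpa using hn
  have h := goodSeqIn_card_ge hr c q (Finset.univ : Finset V)
  rw [hcardU] at h
  have hequiv : Nat.card {v : Fin q → V // GoodSeqIn c Finset.univ v} =
      Nat.card {v : Fin q → V // GoodSeq c v} := by
    apply Nat.card_congr
    exact Equiv.subtypeEquivRight (fun v => by simp [GoodSeqIn])
  rw [hprod]
  rw [hequiv] at h
  exact h
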